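/- arXiv:math/0607525 — 3 statements merged into one kernel-verified Lean document; each statement's English description precedes it below -/
import Mathlib

section
/- The free group on a nonempty set S has asymptotic dimension exactly 1. -/
/-- The word length of a group element `g` with respect to a generating set `T`:
the length of a shortest word in `T ∪ T⁻¹` representing `g`. -/
noncomputable def wordLength {Γ : Type*} [Group Γ] (T : Set Γ) (g : Γ) : ℕ :=
  sInf {n : ℕ | ∃ w : List Γ, w.length = n ∧ (∀ x ∈ w, x ∈ T ∨ x⁻¹ ∈ T) ∧ w.prod = g}

/-- The word metric on a group with respect to a generating set `T`. -/
noncomputable def wordDist {Γ : Type*} [Group Γ] (T : Set Γ) (g₁ g₂ : Γ) : ℝ :=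
  (wordLength T (g₁⁻¹ * g₂) : ℝ)

/-- `AsdimLE d n` : the asymptotic dimension of the space `X` with distance function `d`
is at most `n`: for every `R > 0` there is a cover of `X` by sets of uniformly bounded
diameter such that every `R`-ball meets at most `n + 1` members of the cover. -/
def AsdimLE {X : Type*} (d : X → X → ℝ) (n : ℕ) : Prop :=
  ∀ R : ℝ, 0 < R → ∃ 𝒰 : Set (Set X),
    (∀ x : X, ∃ U ∈ 𝒰, x ∈ U) ∧
    (∃ D : ℝ, ∀ U ∈ 𝒰, ∀ x ∈ U, ∀ y ∈ U, d x y ≤ D) ∧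
    (∀ x : X, {U | U ∈ 𝒰 ∧ ∃ y ∈ U, d x y < R}.Finite ∧
      {U | U ∈ 𝒰 ∧ ∃ y ∈ U, d x y < R}.ncard ≤ n + 1)

/-- The asymptotic dimension of the space `X` with distance function `d`, as an element
of `ℕ∞` (it is `⊤` if no `n` with `AsdimLE d n` exists). -/
noncomputable def asdim {X : Type*} (d : X → X → ℝ) : ℕ∞ :=
  sInf ((↑) '' {n : ℕ | AsdimLE d n})

/-- The asymptotic dimension of a (not necessarily finitely generated) group: the supremum,
over all finitely generated subgroups `H` (equipped with the word metric coming from a finite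
generating set `T` of `H`), of the asymptotic dimension of `H`. -/
noncomputable def groupAsdim (G : Type*) [Group G] : ℕ∞ :=
  ⨆ (H : Subgroup G) (T : Set H) (_ : T.Finite) (_ : Subgroup.closure T = ⊤),
    asdim (wordDist T)

/-- A reduced word in a free group is cyclically reduced if its first letter is not
the inverse of its last letter. -/
def CyclicallyReduced {α : Type*} [DecidableEq α] (r : FreeGroup α) : Prop :=
  ∀ (x : α) (b : Bool), ¬ (r.toWord.head? = some (x, b) ∧ r.toWord.getLast? = some (x, !b))

/-- The exponent sum of the letter `t` in the word `r`. -/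
def expSum {α : Type*} [DecidableEq α] (t : α) (r : FreeGroup α) : ℤ :=
  (r.toWord.map (fun p => if p.1 = t then (if p.2 then (1 : ℤ) else -1) else 0)).sum

namespace AsdimAux

theorem asdimLE_of_comparable {X : Type*} {d d' : X → X → ℝ} {n : ℕ} (C : ℝ) (hC : 0 < C)
    (h1 : ∀ x y, d x y ≤ C * d' x y) (h2 : ∀ x y, d' x y ≤ C * d x y)
    (h : AsdimLE d n) : AsdimLE d' n := by
  intro R hR
  obtain ⟨𝒰, hcov, ⟨D, hD⟩, hball⟩ := h (C * R) (by positivity)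
  refine ⟨𝒰, hcov, ⟨C * D, fun U hU x hx y hy => ?_⟩, fun x => ?_⟩
  · calc d' x y ≤ C * d x y := h2 x y
    _ ≤ C * D := by nlinarith [hD U hU x hx y hy]
  · have hsub : {U | U ∈ 𝒰 ∧ ∃ y ∈ U, d' x y < R} ⊆ {U | U ∈ 𝒰 ∧ ∃ y ∈ U, d x y < C * R} := by
      rintro U ⟨hU, y, hy, hd⟩
      exact ⟨hU, y, hy, lt_of_le_of_lt (h1 x y) (by nlinarith)⟩
    obtain ⟨hfin, hcard⟩ := hball x
    exact ⟨hfin.subset hsub, le_trans (Set.ncard_le_ncard hsub hfin) hcard⟩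

theorem asdimLE_equiv {X Y : Type*} {dX : X → X → ℝ} {dY : Y → Y → ℝ} {n : ℕ}
    (f : X ≃ Y) (hd : ∀ x y : X, dY (f x) (f y) = dX x y)
    (h : AsdimLE dY n) : AsdimLE dX n := by
  intro R hR
  obtain ⟨𝒰, hcov, ⟨D, hD⟩, hball⟩ := h R hR
  refine ⟨(Set.preimage f) '' 𝒰, fun x => ?_, ⟨D, ?_⟩, fun x => ?_⟩
  · obtain ⟨U, hU, hxU⟩ := hcov (f x)
    exact ⟨f ⁻¹' U, Set.mem_image_of_mem _ hU, hxU⟩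
  · rintro _ ⟨U, hU, rfl⟩ x hx y hy
    rw [← hd x y]
    exact hD U hU _ hx _ hy
  · have key : {V | V ∈ (Set.preimage f) '' 𝒰 ∧ ∃ y ∈ V, dX x y < R} =
        (Set.preimage f) '' {U | U ∈ 𝒰 ∧ ∃ z ∈ U, dY (f x) z < R} := by
      ext V
      constructor
      · rintro ⟨⟨U, hU, rfl⟩, y, hy, hdy⟩
        exact ⟨U, ⟨hU, f y, hy, by rwa [hd]⟩, rfl⟩
      · rintro ⟨U, ⟨hU, z, hz, hdz⟩, rfl⟩
        refine ⟨⟨U, hU, rfl⟩, f.symm z, ?_, ?_⟩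
        · simpa using hz
        · have : dX x (f.symm z) = dY (f x) z := by rw [← hd]; simp
          rwa [this]
    obtain ⟨hfin, hcard⟩ := hball (f x)
    have hinj : Function.Injective (Set.preimage f) := fun A B hAB => by
      have := congrArg (Set.image f) hAB
      rwa [Set.image_preimage_eq _ f.surjective, Set.image_preimage_eq _ f.surjective] at this
    rw [key]
    exact ⟨hfin.image _, le_trans (le_of_eq (Set.ncard_image_of_injective _ hinj)) hcard⟩



variable {Γ : Type*} [Group Γ] {T : Set Γ}

theorem exists_word (h : Subgroup.closure T = ⊤) (g : Γ) :
    ∃ w : List Γ, (∀ x ∈ w, x ∈ T ∨ x⁻¹ ∈ T) ∧ w.prod = g := by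
  have hg : g ∈ (Subgroup.closure T).toSubmonoid := by rw [h]; trivial
  rw [Subgroup.closure_toSubmonoid] at hg
  obtain ⟨w, hw, hp⟩ := Submonoid.exists_list_of_mem_closure hg
  exact ⟨w, fun x hx => by
    rcases hw x hx with h' | h'
    · exact Or.inl h'
    · exact Or.inr (Set.mem_inv.mp h'), hp⟩

theorem wordLength_le {g : Γ} (w : List Γ) (hw : ∀ x ∈ w, x ∈ T ∨ x⁻¹ ∈ T)
    (hp : w.prod = g) : wordLength T g ≤ w.length :=
  Nat.sInf_le ⟨w, rfl, hw, hp⟩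

theorem wordLength_spec (h : Subgroup.closure T = ⊤) (g : Γ) :
    ∃ w : List Γ, w.length = wordLength T g ∧ (∀ x ∈ w, x ∈ T ∨ x⁻¹ ∈ T) ∧ w.prod = g := by
  have hne : {n : ℕ | ∃ w : List Γ, w.length = n ∧ (∀ x ∈ w, x ∈ T ∨ x⁻¹ ∈ T) ∧ w.prod = g}.Nonempty := by
    obtain ⟨w, hw, hp⟩ := exists_word h g
    exact ⟨w.length, w, rfl, hw, hp⟩
  exact Nat.sInf_mem hne

theorem wordLength_one : wordLength T (1 : Γ) = 0 :=
  Nat.le_zero.mp (wordLength_le [] (by simp) (by simp))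

theorem wordLength_mul_le (h : Subgroup.closure T = ⊤) (g₁ g₂ : Γ) :
    wordLength T (g₁ * g₂) ≤ wordLength T g₁ + wordLength T g₂ := by
  obtain ⟨w₁, hl₁, hw₁, hp₁⟩ := wordLength_spec h g₁
  obtain ⟨w₂, hl₂, hw₂, hp₂⟩ := wordLength_spec h g₂
  have := wordLength_le (T := T) (w₁ ++ w₂)
    (fun x hx => by rcases List.mem_append.mp hx with h' | h'
                    exacts [hw₁ x h', hw₂ x h'])
    (by rw [List.prod_append, hp₁, hp₂])
  simpa [hl₁, hl₂] using this

theorem exists_bound {T' : Set Γ} (hT' : T'.Finite) :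
    ∃ C : ℕ, ∀ t : Γ, (t ∈ T' ∨ t⁻¹ ∈ T') → wordLength T t ≤ C := by
  obtain ⟨C, hC⟩ := (hT'.image (fun t => max (wordLength T t) (wordLength T t⁻¹))).bddAbove
  refine ⟨C, fun t ht => ?_⟩
  rcases ht with h' | h'
  · exact le_trans (le_max_left _ _) (hC (Set.mem_image_of_mem _ h'))
  · have := hC (Set.mem_image_of_mem (fun t => max (wordLength T t) (wordLength T t⁻¹)) h')
    simpa using le_trans (le_max_right _ _) this

theorem wordLength_comparison (h : Subgroup.closure T = ⊤) {T' : Set Γ} {C : ℕ}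
    (hC : ∀ t : Γ, (t ∈ T' ∨ t⁻¹ ∈ T') → wordLength T t ≤ C) :
    ∀ w : List Γ, (∀ x ∈ w, x ∈ T' ∨ x⁻¹ ∈ T') → wordLength T w.prod ≤ C * w.length := by
  intro w
  induction w with
  | nil => intro _; simp [wordLength_one]
  | cons a w ih =>
    intro hw
    have h1 : wordLength T (a * w.prod) ≤ wordLength T a + wordLength T w.prod :=
      wordLength_mul_le h a w.prod
    have h2 := ih (fun x hx => hw x (List.mem_cons_of_mem a hx))
    have h3 := hC a (hw a List.mem_cons_self)
    calc wordLength T (a :: w).prod = wordLength T (a * w.prod) := by rw [List.prod_cons]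
    _ ≤ C + C * w.length := by omega
    _ = C * (a :: w).length := by simp [List.length_cons]; ring

theorem wordLength_le_of_comparison (h : Subgroup.closure T = ⊤) {T' : Set Γ}
    (h' : Subgroup.closure T' = ⊤) {C : ℕ}
    (hC : ∀ t : Γ, (t ∈ T' ∨ t⁻¹ ∈ T') → wordLength T t ≤ C) (g : Γ) :
    wordLength T g ≤ C * wordLength T' g := by
  obtain ⟨w, hl, hw, hp⟩ := wordLength_spec h' g
  calc wordLength T g = wordLength T w.prod := by rw [hp]
  _ ≤ C * w.length := wordLength_comparison h hC w hw
  _ = C * wordLength T' g := by rw [hl]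




open FreeGroup List

variable {α : Type*} [DecidableEq α]

/-- The no-cancellation relation on letters. -/
def NC (a b : α × Bool) : Prop := ¬(b.1 = a.1 ∧ b.2 = !a.2)

theorem chain'_of_reduce_eq : ∀ {L : List (α × Bool)}, reduce L = L → L.Chain' NC := by
  intro L
  induction L with
  | nil => intro _; exact List.isChain_nil
  | cons a t ih =>
    intro h
    have hlen : (reduce t).length ≤ t.length := FreeGroup.reduce.red.length_le
    cases hr : reduce t with
    | nil =>
      rw [reduce.cons, hr] at h
      dsimp at h
      injection h with _ h2
      subst h2
      exact List.isChain_singleton a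
    | cons hd tl =>
      rw [reduce.cons, hr] at h
      dsimp at h
      by_cases hc : a.1 = hd.1 ∧ a.2 = !hd.2
      · rw [if_pos hc] at h
        exfalso
        have := congrArg List.length h
        rw [hr] at hlen
        simp at this hlen
        omega
      · rw [if_neg hc] at h
        have ht : t = hd :: tl := by
          injection h with _ h2
          exact h2.symm
        subst ht
        refine List.isChain_cons_cons.mpr ⟨?_, ih hr⟩
        intro ⟨h1, h2⟩
        exact hc ⟨h1.symm, by rw [h2, Bool.not_not]⟩

theorem reduce_eq_of_chain' : ∀ {L : List (α × Bool)}, L.Chain' NC → reduce L = L := by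
  intro L
  induction L with
  | nil => intro _; rfl
  | cons a t ih =>
    intro h
    rw [reduce.cons, ih h.tail]
    cases t with
    | nil => rfl
    | cons hd tl =>
      dsimp
      rw [if_neg]
      intro ⟨h1, h2⟩
      exact (List.isChain_cons_cons.mp h).1 ⟨h1.symm, by rw [h2, Bool.not_not]⟩

theorem chain'_toWord (g : FreeGroup α) : g.toWord.Chain' NC :=
  chain'_of_reduce_eq (reduce_toWord g)

theorem prod_map_singleton : ∀ L : List (α × Bool),
    (L.map fun p => FreeGroup.mk [p]).prod = FreeGroup.mk L := by
  intro L
  induction L with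
  | nil => simp [← FreeGroup.one_eq_mk]
  | cons p t ih => rw [List.map_cons, List.prod_cons, ih, FreeGroup.mul_mk]; rfl

theorem toWord_mul_single (g : FreeGroup α) (p : α × Bool) :
    (g * FreeGroup.mk [p]).toWord = g.toWord ++ [p] ∨
      ∃ w, g.toWord = w ++ [(p.1, !p.2)] ∧ (g * FreeGroup.mk [p]).toWord = w := by
  have hchain := chain'_toWord g
  have hmul : g * FreeGroup.mk [p] = FreeGroup.mk (g.toWord ++ [p]) := by
    conv_lhs => rw [← FreeGroup.mk_toWord (x := g)]
    rw [FreeGroup.mul_mk]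
  rcases List.eq_nil_or_concat g.toWord with hnil | ⟨w, a, hcat⟩
  <;> [skip; rw [List.concat_eq_append] at hcat]
  · left
    rw [hmul, hnil]
    simp [FreeGroup.toWord_mk, FreeGroup.reduce_singleton]
  · by_cases ha : a = (p.1, !p.2)
    · right
      refine ⟨w, by rw [hcat, ha], ?_⟩
      have hstep : FreeGroup.mk (w ++ (p.1, !p.2) :: (p.1, !(!p.2)) :: []) = FreeGroup.mk (w ++ []) := by
        rw [← FreeGroup.quot_mk_eq_mk, ← FreeGroup.quot_mk_eq_mk]
        exact Quot.sound (FreeGroup.Red.Step.not)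
      have heq : g * FreeGroup.mk [p] = FreeGroup.mk w := by
        rw [hmul, hcat, ha]
        have : (w ++ [(p.1, !p.2)]) ++ [p] = w ++ (p.1, !p.2) :: (p.1, !(!p.2)) :: [] := by
          simp [Bool.not_not]
        rw [this, hstep, List.append_nil]
      rw [heq, FreeGroup.toWord_mk]
      apply reduce_eq_of_chain'
      rw [hcat] at hchain
      exact (List.isChain_append.mp hchain).1
    · left
      rw [hmul, FreeGroup.toWord_mk]
      apply reduce_eq_of_chain'
      refine List.isChain_append.mpr ?_
      refine ⟨hchain, List.isChain_singleton p, ?_⟩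
      intro x hx y hy
      rw [hcat, List.getLast?_concat] at hx
      simp at hx hy
      subst hx; subst hy
      intro ⟨h1, h2⟩
      exact ha (Prod.ext h1.symm (by rw [h2]; simp))

theorem take_toWord_mul_single (g : FreeGroup α) (p : α × Bool) (q : ℕ)
    (hq1 : q ≤ g.toWord.length) (hq2 : q ≤ (g * FreeGroup.mk [p]).toWord.length) :
    (g * FreeGroup.mk [p]).toWord.take q = g.toWord.take q := by
  rcases toWord_mul_single g p with h | ⟨w, hw, h⟩
  · rw [h, List.take_append_of_le_length hq1]
  · rw [h, hw, List.take_append_of_le_length]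
    rw [h] at hq2
    exact hq2


theorem take_eq_of_path : ∀ (w : List (α × Bool))  (y : FreeGroup α) (q : ℕ),
    (∀ i ≤ w.length, q ≤ (y * FreeGroup.mk (w.take i)).toWord.length) →
    (y * FreeGroup.mk w).toWord.take q = y.toWord.take q := by
  intro w
  induction w with
  | nil =>
    intro y q _
    have : FreeGroup.mk ([] : List (α × Bool)) = 1 := FreeGroup.one_eq_mk.symm
    rw [this, mul_one]
  | cons p t ih =>
    intro y q hq
    have hy' : y * FreeGroup.mk (p :: t) = (y * FreeGroup.mk [p]) * FreeGroup.mk t := by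
      rw [mul_assoc, FreeGroup.mul_mk]; rfl
    have h0 : q ≤ y.toWord.length := by
      have := hq 0 (by simp)
      rw [List.take_zero, ← FreeGroup.one_eq_mk, mul_one] at this
      exact this
    have h1 : q ≤ (y * FreeGroup.mk [p]).toWord.length := by
      have := hq 1 (by simp)
      simpa using this
    have hrest : ∀ i ≤ t.length, q ≤ ((y * FreeGroup.mk [p]) * FreeGroup.mk (t.take i)).toWord.length := by
      intro i hi
      have := hq (i + 1) (by simp only [List.length_cons]; omega)
      have harr : y * FreeGroup.mk ((p :: t).take (i+1)) = (y * FreeGroup.mk [p]) * FreeGroup.mk (t.take i) := by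
        rw [List.take_succ_cons, mul_assoc, FreeGroup.mul_mk]; rfl
      rwa [harr] at this
    rw [hy', ih _ q hrest, take_toWord_mul_single y p q h0 h1]

theorem norm_mk_take_le (w : List (α × Bool)) (i : ℕ) :
    (FreeGroup.mk (w.take i)).toWord.length ≤ i := by
  calc (FreeGroup.mk (w.take i)).toWord.length ≤ (w.take i).length := FreeGroup.norm_mk_le
  _ ≤ i := by simp

theorem take_eq_of_close (y z : FreeGroup α) (q n : ℕ)
    (hn : (y⁻¹ * z).toWord.length ≤ n)
    (h : 2*q + n ≤ y.toWord.length + z.toWord.length) :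
    y.toWord.take q = z.toWord.take q := by
  set w := (y⁻¹ * z).toWord with hw
  have hz : y * FreeGroup.mk w = z := by
    rw [hw, FreeGroup.mk_toWord]; group
  have hq : ∀ i ≤ w.length, q ≤ (y * FreeGroup.mk (w.take i)).toWord.length := by
    intro i hi
    set yi := y * FreeGroup.mk (w.take i) with hyi
    have hy : y.toWord.length ≤ yi.toWord.length + i := by
      have : y = yi * (FreeGroup.mk (w.take i))⁻¹ := by rw [hyi]; group
      calc y.toWord.length = (yi * (FreeGroup.mk (w.take i))⁻¹).toWord.length := by rw [← this]
      _ ≤ yi.toWord.length + ((FreeGroup.mk (w.take i))⁻¹).toWord.length := FreeGroup.norm_mul_le _ _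
      _ ≤ yi.toWord.length + i := by
          have := FreeGroup.norm_inv_eq (x := FreeGroup.mk (w.take i))
          have h2 := norm_mk_take_le w i
          simp only [FreeGroup.norm] at this
          omega
    have hzle : z.toWord.length ≤ yi.toWord.length + (w.length - i) := by
      have hsplit : z = yi * FreeGroup.mk (w.drop i) := by
        rw [hyi, mul_assoc, FreeGroup.mul_mk, List.take_append_drop, hz]
      calc z.toWord.length = (yi * FreeGroup.mk (w.drop i)).toWord.length := by rw [← hsplit]
      _ ≤ yi.toWord.length + (FreeGroup.mk (w.drop i)).toWord.length := FreeGroup.norm_mul_le _ _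
      _ ≤ yi.toWord.length + (w.length - i) := by
          have : (FreeGroup.mk (w.drop i)).toWord.length ≤ (w.drop i).length := FreeGroup.norm_mk_le
          simp only [List.length_drop] at this
          omega
    omega
  have := take_eq_of_path w y q hq
  rw [hz] at this
  exact this.symm

theorem norm_le_of_take_eq (y z : FreeGroup α) (q : ℕ)
    (h : y.toWord.take q = z.toWord.take q) :
    (y⁻¹ * z).toWord.length ≤ (y.toWord.length - q) + (z.toWord.length - q) := by
  have hy : y = FreeGroup.mk (y.toWord.take q) * FreeGroup.mk (y.toWord.drop q) := by
    rw [FreeGroup.mul_mk, List.take_append_drop, FreeGroup.mk_toWord]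
  have hzz : z = FreeGroup.mk (y.toWord.take q) * FreeGroup.mk (z.toWord.drop q) := by
    rw [h, FreeGroup.mul_mk, List.take_append_drop, FreeGroup.mk_toWord]
  have hkey : y⁻¹ * z = (FreeGroup.mk (y.toWord.drop q))⁻¹ * FreeGroup.mk (z.toWord.drop q) := by
    conv_lhs => rw [hy, hzz]
    group
  rw [hkey]
  calc ((FreeGroup.mk (y.toWord.drop q))⁻¹ * FreeGroup.mk (z.toWord.drop q)).toWord.length
      ≤ ((FreeGroup.mk (y.toWord.drop q))⁻¹).toWord.length + (FreeGroup.mk (z.toWord.drop q)).toWord.length :=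
        FreeGroup.norm_mul_le _ _
  _ ≤ (y.toWord.length - q) + (z.toWord.length - q) := by
      have h1 : ((FreeGroup.mk (y.toWord.drop q))⁻¹).toWord.length = (FreeGroup.mk (y.toWord.drop q)).toWord.length :=
        FreeGroup.norm_inv_eq
      have h2 : (FreeGroup.mk (y.toWord.drop q)).toWord.length ≤ y.toWord.length - q := by
        have := FreeGroup.norm_mk_le (L₁ := y.toWord.drop q)
        simpa [FreeGroup.norm] using this
      have h3 : (FreeGroup.mk (z.toWord.drop q)).toWord.length ≤ z.toWord.length - q := by
        have := FreeGroup.norm_mk_le (L₁ := z.toWord.drop q)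
        simpa [FreeGroup.norm] using this
      omega

theorem wordLength_range_of (g : FreeGroup α) :
    wordLength (Set.range (FreeGroup.of : α → FreeGroup α)) g = g.toWord.length := by
  apply _root_.le_antisymm
  · refine le_trans (wordLength_le (g.toWord.map fun p => FreeGroup.mk [p]) ?_ ?_) (by simp)
    · intro x hx
      simp only [List.mem_map] at hx
      obtain ⟨⟨a, b⟩, _, rfl⟩ := hx
      cases b
      · right
        refine ⟨a, ?_⟩
        rw [FreeGroup.of]
        rw [FreeGroup.inv_mk]
        rfl
      · exact Or.inl ⟨a, rfl⟩
    · rw [prod_map_singleton, FreeGroup.mk_toWord]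
  · have hgen : Subgroup.closure (Set.range (FreeGroup.of : α → FreeGroup α)) = ⊤ :=
      FreeGroup.closure_range_of α
    obtain ⟨w, hl, hw, hp⟩ := wordLength_spec hgen g
    rw [← hl, ← hp]
    clear hl hp
    induction w with
    | nil => simp
    | cons x t ih =>
      rw [List.prod_cons]
      have hx : x.toWord.length ≤ 1 := by
        rcases hw x List.mem_cons_self with ⟨a, rfl⟩ | ⟨a, ha⟩
        · simp
        · have hx' : x⁻¹ = FreeGroup.of a := ha.symm
          have : x = (FreeGroup.of a)⁻¹ := by rw [← hx', inv_inv]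
          rw [this]
          simp [FreeGroup.toWord_inv, FreeGroup.invRev_length]
      calc (x * t.prod).toWord.length ≤ x.toWord.length + t.prod.toWord.length :=
            FreeGroup.norm_mul_le _ _
      _ ≤ 1 + t.length := by
          have := ih (fun y hy => hw y (List.mem_cons_of_mem x hy))
          omega
      _ = (x :: t).length := by simp [Nat.add_comm]


theorem asdimLE_one_freeGroup (β : Type*) :
    AsdimLE (wordDist (Set.range (FreeGroup.of : β → FreeGroup β))) 1 := by
  letI : DecidableEq β := Classical.decEq β
  intro R hR
  set B : Set (FreeGroup β) := Set.range (FreeGroup.of : β → FreeGroup β) with hB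
  set m : ℕ := ⌈R⌉₊ with hm
  have hm1 : 1 ≤ m := Nat.one_le_iff_ne_zero.mpr (by positivity)
  set nrm : FreeGroup β → ℕ := fun g => g.toWord.length with hnrm
  have hd : ∀ g h : FreeGroup β, wordDist B g h = ((nrm (g⁻¹ * h) : ℕ) : ℝ) := by
    intro g h
    rw [wordDist, hB, wordLength_range_of]
  set L : ℕ := 2 * m with hL
  have hL0 : 0 < L := by omega
  set tag : FreeGroup β → ℕ × List (β × Bool) :=
    fun g => (nrm g / L, g.toWord.take (nrm g / L * L - m)) with htag
  set 𝒰 : Set (Set (FreeGroup β)) := Set.range (fun g => tag ⁻¹' {tag g}) with h𝒰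
  -- distance bound when tags agree
  have hdiam : ∀ y z : FreeGroup β, tag y = tag z → nrm (y⁻¹ * z) ≤ 6 * m := by
    intro y z htz
    have hk : nrm y / L = nrm z / L := congrArg Prod.fst htz
    have htake : y.toWord.take (nrm y / L * L - m) = z.toWord.take (nrm y / L * L - m) := by
      have := congrArg Prod.snd htz
      simp only [htag] at this
      rw [← hk] at this
      exact this
    set q : ℕ := nrm y / L * L - m with hq
    have h1 := norm_le_of_take_eq y z q htake
    have hymod : nrm y < nrm y / L * L + L := by
      have h2 := Nat.div_add_mod (nrm y) L
      have h3 := Nat.mod_lt (nrm y) hL0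
      rw [mul_comm (nrm y / L) L]
      omega
    have hzmod : nrm z < nrm z / L * L + L := by
      have h2 := Nat.div_add_mod (nrm z) L
      have h3 := Nat.mod_lt (nrm z) hL0
      rw [mul_comm (nrm z / L) L]
      omega
    rw [← hk] at hzmod
    have e1 : nrm y = y.toWord.length := rfl
    have e2 : nrm z = z.toWord.length := rfl
    have e3 : nrm (y⁻¹ * z) = (y⁻¹ * z).toWord.length := rfl
    omega
  refine ⟨𝒰, fun x => ⟨tag ⁻¹' {tag x}, ⟨x, rfl⟩, rfl⟩, ⟨((6 * m : ℕ) : ℝ), ?_⟩, fun x => ?_⟩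
  · rintro U ⟨g, rfl⟩ y hy z hz
    rw [hd]
    have : tag y = tag z := by
      rw [Set.mem_preimage, Set.mem_singleton_iff] at hy hz
      rw [hy, hz]
    exact_mod_cast Nat.cast_le.mpr (hdiam y z this)
  · -- ball condition at x
    set s : Set (Set (FreeGroup β)) := {U | U ∈ 𝒰 ∧ ∃ y ∈ U, wordDist B x y < R} with hs
    have key1 : ∀ y : FreeGroup β, wordDist B x y < R → nrm (x⁻¹ * y) + 1 ≤ m := by
      intro y hy
      rw [hd] at hy
      have := Nat.lt_ceil.mpr hy
      omega
    have hwin : ∀ y : FreeGroup β, wordDist B x y < R →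
        nrm x ≤ nrm y + (m - 1) ∧ nrm y ≤ nrm x + (m - 1) := by
      intro y hy
      have h1 := key1 y hy
      constructor
      · have hxy : x = y * (y⁻¹ * x) := by group
        have : nrm x ≤ nrm y + nrm (y⁻¹ * x) := by
          conv_lhs => rw [hxy]
          exact FreeGroup.norm_mul_le y (y⁻¹ * x)
        have hinv : nrm (y⁻¹ * x) = nrm (x⁻¹ * y) := by
          have : (y⁻¹ * x) = (x⁻¹ * y)⁻¹ := by group
          rw [this]
          exact FreeGroup.norm_inv_eq
        omega
      · have hxy : y = x * (x⁻¹ * y) := by group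
        have : nrm y ≤ nrm x + nrm (x⁻¹ * y) := by
          conv_lhs => rw [hxy]
          exact FreeGroup.norm_mul_le x (x⁻¹ * y)
        omega
    set a : ℕ := (nrm x - (m - 1)) / L with ha
    have key3 : ∀ y : FreeGroup β, wordDist B x y < R → a ≤ nrm y / L ∧ nrm y / L ≤ a + 1 := by
      intro y hy
      obtain ⟨hw1, hw2⟩ := hwin y hy
      constructor
      · exact Nat.div_le_div_right (by omega)
      · have : nrm y ≤ (nrm x - (m - 1)) + L := by omega
        calc nrm y / L ≤ ((nrm x - (m - 1)) + L) / L := Nat.div_le_div_right this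
        _ = a + 1 := by rw [Nat.add_div_right _ hL0]
    have key2 : ∀ y z : FreeGroup β, wordDist B x y < R → wordDist B x z < R →
        nrm y / L = nrm z / L → tag y = tag z := by
      intro y z hy hz hkeq
      have hyz : nrm (y⁻¹ * z) ≤ 2 * m - 2 := by
        have h1 := key1 y hy
        have h2 := key1 z hz
        have : y⁻¹ * z = (x⁻¹ * y)⁻¹ * (x⁻¹ * z) := by group
        have hle : nrm (y⁻¹ * z) ≤ nrm ((x⁻¹ * y)⁻¹) + nrm (x⁻¹ * z) := by
          rw [this]; exact FreeGroup.norm_mul_le _ _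
        have hinv : nrm ((x⁻¹ * y)⁻¹) = nrm (x⁻¹ * y) := FreeGroup.norm_inv_eq
        omega
      have htake : y.toWord.take (nrm y / L * L - m) = z.toWord.take (nrm y / L * L - m) := by
        rcases Nat.eq_zero_or_pos (nrm y / L) with hk0 | hkpos
        · rw [hk0]
          simp [Nat.zero_mul, Nat.zero_sub]
        · have hky : nrm y / L * L ≤ nrm y := Nat.div_mul_le_self (nrm y) L
          have hkz : nrm y / L * L ≤ nrm z := by
            rw [hkeq]
            exact Nat.div_mul_le_self (nrm z) L
          have hKL : L ≤ nrm y / L * L := Nat.le_mul_of_pos_left L hkpos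
          have e1 : nrm y = y.toWord.length := rfl
          have e2 : nrm z = z.toWord.length := rfl
          have e3 : nrm (y⁻¹ * z) = (y⁻¹ * z).toWord.length := rfl
          apply take_eq_of_close y z (nrm y / L * L - m) (2 * m - 2) (by omega)
          omega
      rw [htag]
      dsimp only
      rw [← hkeq]
      exact Prod.ext rfl htake
    -- extract representatives
    have hrep : ∀ U ∈ s, ∃ y : FreeGroup β, wordDist B x y < R ∧ U = tag ⁻¹' {tag y} := by
      rintro U ⟨⟨g, rfl⟩, y, hyU, hyd⟩
      refine ⟨y, hyd, ?_⟩
      rw [Set.mem_preimage, Set.mem_singleton_iff] at hyU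
      rw [hyU]
    rcases Set.eq_empty_or_nonempty s with hse | ⟨U₁, hU₁⟩
    · rw [hse]
      exact ⟨Set.finite_empty, by simp⟩
    by_cases hss : ∀ U ∈ s, U = U₁
    · have hsub : s ⊆ {U₁} := fun U hU => hss U hU
      exact ⟨(Set.finite_singleton U₁).subset hsub,
        le_trans (Set.ncard_le_ncard hsub (Set.finite_singleton U₁)) (by simp)⟩
    · push_neg at hss
      obtain ⟨U₂, hU₂, hne⟩ := hss
      obtain ⟨y₁, hy₁d, hU₁e⟩ := hrep U₁ hU₁
      obtain ⟨y₂, hy₂d, hU₂e⟩ := hrep U₂ hU₂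
      have hk12 : nrm y₁ / L ≠ nrm y₂ / L := by
        intro hkeq
        exact hne (by rw [hU₂e, hU₁e, key2 y₁ y₂ hy₁d hy₂d hkeq])
      have hsub : s ⊆ {U₁, U₂} := by
        intro U₃ hU₃
        obtain ⟨y₃, hy₃d, hU₃e⟩ := hrep U₃ hU₃
        have h1 := key3 y₁ hy₁d
        have h2 := key3 y₂ hy₂d
        have h3 := key3 y₃ hy₃d
        have : nrm y₃ / L = nrm y₁ / L ∨ nrm y₃ / L = nrm y₂ / L := by omega
        rcases this with h | h
        · rw [hU₃e, key2 y₃ y₁ hy₃d hy₁d h, ← hU₁e]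
          exact Set.mem_insert _ _
        · rw [hU₃e, key2 y₃ y₂ hy₃d hy₂d h, ← hU₂e]
          exact Set.mem_insert_of_mem _ rfl
      have hpf : ({U₁, U₂} : Set (Set (FreeGroup β))).Finite := Set.toFinite _
      refine ⟨hpf.subset hsub, le_trans (Set.ncard_le_ncard hsub hpf) ?_⟩
      calc ({U₁, U₂} : Set (Set (FreeGroup β))).ncard ≤ ({U₂} : Set (Set (FreeGroup β))).ncard + 1 :=
            Set.ncard_insert_le _ _
      _ ≤ 1 + 1 := by simp

theorem witness_map {Γ Γ' : Type*} [Group Γ] [Group Γ'] (e : Γ ≃* Γ') (T : Set Γ) (g : Γ) (n : ℕ)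
    (h : ∃ w : List Γ, w.length = n ∧ (∀ x ∈ w, x ∈ T ∨ x⁻¹ ∈ T) ∧ w.prod = g) :
    ∃ w : List Γ', w.length = n ∧ (∀ x ∈ w, x ∈ ⇑e '' T ∨ x⁻¹ ∈ ⇑e '' T) ∧ w.prod = e g := by
  obtain ⟨w, hl, hw, hp⟩ := h
  refine ⟨w.map ⇑e, by simp [hl], ?_, ?_⟩
  · intro x hx
    simp only [List.mem_map] at hx
    obtain ⟨y, hy, rfl⟩ := hx
    rcases hw y hy with h' | h'
    · exact Or.inl (Set.mem_image_of_mem _ h')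
    · right
      have hinv : (e y)⁻¹ = e y⁻¹ := (map_inv e y).symm
      rw [hinv]
      exact Set.mem_image_of_mem _ h'
  · rw [← map_list_prod e, hp]

theorem wordLength_equiv {Γ Γ' : Type*} [Group Γ] [Group Γ'] (e : Γ ≃* Γ') (T : Set Γ) (g : Γ) :
    wordLength (⇑e '' T) (e g) = wordLength T g := by
  unfold wordLength
  congr 1
  ext n
  constructor
  · intro h
    have := witness_map e.symm (⇑e '' T) (e g) n h
    have himg : ⇑e.symm '' (⇑e '' T) = T := by
      rw [Set.image_image]
      simp
    rw [himg] at this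
    simpa using this
  · exact witness_map e T g n

theorem finite_of_freeGroup_fg {β : Type*} {T : Set (FreeGroup β)} (hT : T.Finite)
    (hgen : Subgroup.closure T = ⊤) : Finite β := by
  letI : DecidableEq β := Classical.decEq β
  set β₀ : Set β := ⋃ t ∈ T, {a | ∃ b, (a, b) ∈ t.toWord} with hβ₀
  have hβ₀fin : β₀.Finite := by
    refine Set.Finite.biUnion hT (fun t _ => ?_)
    refine (t.toWord.map Prod.fst).finite_toSet.subset ?_
    rintro a ⟨b, hb⟩
    exact List.mem_map.mpr ⟨(a, b), hb, rfl⟩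
  set P : Subgroup (FreeGroup β) :=
    { carrier := {g | ∀ p ∈ g.toWord, p.1 ∈ β₀}
      one_mem' := by
        intro p hp
        simp [FreeGroup.toWord_one] at hp
      mul_mem' := by
        intro g h hg hh p hp
        have hsub := (FreeGroup.toWord_mul_sublist g h).subset hp
        rcases List.mem_append.mp hsub with h' | h'
        · exact hg p h'
        · exact hh p h'
      inv_mem' := by
        intro g hg p hp
        rw [FreeGroup.toWord_inv, FreeGroup.invRev] at hp
        rw [List.mem_reverse, List.mem_map] at hp
        obtain ⟨q, hq, rfl⟩ := hp
        exact hg q hq } with hP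
  have hall : ∀ g : FreeGroup β, g ∈ P := by
    intro g
    have : Subgroup.closure T ≤ P := (Subgroup.closure_le P).mpr (by
      intro t ht p hp
      exact Set.mem_biUnion ht ⟨p.2, by simpa using hp⟩)
    rw [hgen] at this
    exact this trivial
  have huniv : (Set.univ : Set β) ⊆ β₀ := by
    intro a _
    have := hall (FreeGroup.of a) (a, true) (by rw [FreeGroup.toWord_of]; simp)
    exact this
  exact Set.finite_univ_iff.mp (hβ₀fin.subset huniv)

theorem upper {S : Type*} (H : Subgroup (FreeGroup S)) (T : Set ↥H) (hfin : T.Finite)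
    (hclos : Subgroup.closure T = ⊤) : AsdimLE (wordDist T) 1 := by
  set e : ↥H ≃* FreeGroup (IsFreeGroup.Generators ↥H) := IsFreeGroup.toFreeGroup ↥H with he
  set β := IsFreeGroup.Generators ↥H
  set T₂ : Set (FreeGroup β) := ⇑e '' T with hT₂
  have hfin₂ : T₂.Finite := hfin.image _
  have hclos₂ : Subgroup.closure T₂ = ⊤ := by
    have h1 := MonoidHom.map_closure e.toMonoidHom T
    rw [hclos, Subgroup.map_top_of_surjective _ e.surjective] at h1
    simp only [MulEquiv.coe_toMonoidHom] at h1
    rw [hT₂]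
    exact h1.symm
  haveI : Finite β := finite_of_freeGroup_fg hfin₂ hclos₂
  have hBfin : (Set.range (FreeGroup.of : β → FreeGroup β)).Finite := Set.finite_range _
  have hBgen : Subgroup.closure (Set.range (FreeGroup.of : β → FreeGroup β)) = ⊤ :=
    FreeGroup.closure_range_of β
  obtain ⟨C₁, hC₁⟩ := exists_bound (T := T₂) hBfin
  obtain ⟨C₂, hC₂⟩ := exists_bound (T := Set.range (FreeGroup.of : β → FreeGroup β)) hfin₂
  have h1 : ∀ g, wordLength T₂ g ≤ C₁ * wordLength (Set.range (FreeGroup.of : β → FreeGroup β)) g :=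
    wordLength_le_of_comparison hclos₂ hBgen hC₁
  have h2 : ∀ g, wordLength (Set.range (FreeGroup.of : β → FreeGroup β)) g ≤ C₂ * wordLength T₂ g :=
    wordLength_le_of_comparison hBgen hclos₂ hC₂
  set C : ℕ := max C₁ C₂ + 1 with hC
  have hasd₂ : AsdimLE (wordDist T₂) 1 := by
    refine asdimLE_of_comparable (C : ℝ) (by positivity) ?_ ?_ (asdimLE_one_freeGroup β)
    · intro x y
      unfold wordDist
      have := h2 (x⁻¹ * y)
      have hle : wordLength (Set.range (FreeGroup.of : β → FreeGroup β)) (x⁻¹ * y) ≤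
          C * wordLength T₂ (x⁻¹ * y) := le_trans this (by
        apply Nat.mul_le_mul_right
        omega)
      exact_mod_cast hle
    · intro x y
      unfold wordDist
      have := h1 (x⁻¹ * y)
      have hle : wordLength T₂ (x⁻¹ * y) ≤
          C * wordLength (Set.range (FreeGroup.of : β → FreeGroup β)) (x⁻¹ * y) :=
        le_trans this (by
          apply Nat.mul_le_mul_right
          omega)
      exact_mod_cast hle
  refine asdimLE_equiv e.toEquiv ?_ hasd₂
  intro x y
  unfold wordDist
  have h3 : ((e.toEquiv x)⁻¹ * e.toEquiv y) = e (x⁻¹ * y) := by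
    show (e x)⁻¹ * e y = e (x⁻¹ * y)
    simp
  rw [h3, hT₂, wordLength_equiv]

theorem coe_norm_le_wordLength {S : Type*} [DecidableEq S] {H : Subgroup (FreeGroup S)}
    {T : Set ↥H} (hclos : Subgroup.closure T = ⊤)
    (hT : ∀ x : ↥H, x ∈ T → (x : FreeGroup S).toWord.length ≤ 1) (h : ↥H) :
    (h : FreeGroup S).toWord.length ≤ wordLength T h := by
  obtain ⟨w, hl, hw, hp⟩ := wordLength_spec hclos h
  rw [← hl, ← hp]
  clear hl hp
  induction w with
  | nil => simp
  | cons x t ih =>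
    have hx : (x : FreeGroup S).toWord.length ≤ 1 := by
      rcases hw x List.mem_cons_self with h' | h'
      · exact hT x h'
      · have h2 := hT x⁻¹ h'
        have h3 : ((x⁻¹ : ↥H) : FreeGroup S) = ((x : ↥H) : FreeGroup S)⁻¹ := rfl
        rw [h3] at h2
        have h4 : (((x : ↥H) : FreeGroup S)⁻¹).toWord.length = ((x : ↥H) : FreeGroup S).toWord.length :=
          FreeGroup.norm_inv_eq
        omega
    have hsplit : ((((x :: t).prod : ↥H)) : FreeGroup S) =
        ((x : ↥H) : FreeGroup S) * ((t.prod : ↥H) : FreeGroup S) := by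
      rw [List.prod_cons]
      rfl
    rw [hsplit]
    have hmul : (((x : ↥H) : FreeGroup S) * ((t.prod : ↥H) : FreeGroup S)).toWord.length ≤
        ((x : ↥H) : FreeGroup S).toWord.length + ((t.prod : ↥H) : FreeGroup S).toWord.length :=
      FreeGroup.norm_mul_le _ _
    have hih := ih (fun y hy => hw y (List.mem_cons_of_mem x hy))
    simp only [List.length_cons]
    omega

theorem lower {S : Type*} (s₀ : S) :
    ∃ (H : Subgroup (FreeGroup S)) (T : Set ↥H), T.Finite ∧ Subgroup.closure T = ⊤ ∧
      ¬ AsdimLE (wordDist T) 0 := by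
  letI : DecidableEq S := Classical.decEq S
  set a : FreeGroup S := FreeGroup.of s₀ with ha
  set H := Subgroup.closure ({a} : Set (FreeGroup S)) with hH
  set t : ↥H := ⟨a, Subgroup.mem_closure_singleton_self a⟩ with ht
  have hclos : Subgroup.closure ({t} : Set ↥H) = ⊤ := by
    rw [eq_top_iff]
    intro h _
    obtain ⟨n, hn⟩ := Subgroup.mem_closure_singleton.mp h.2
    have heq : h = t ^ n := by
      apply Subtype.ext
      rw [SubgroupClass.coe_zpow]
      exact hn.symm
    rw [heq]
    exact zpow_mem (Subgroup.mem_closure_singleton_self t) n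
  refine ⟨H, {t}, Set.finite_singleton t, hclos, ?_⟩
  intro hA
  obtain ⟨𝒰, hcov, ⟨D, hD⟩, hball⟩ := hA 2 two_pos
  obtain ⟨U₀, hU₀, h1U₀⟩ := hcov 1
  have hstep : ∀ n : ℕ, t ^ n ∈ U₀ := by
    intro n
    induction n with
    | zero => simpa using h1U₀
    | succ n ih =>
      obtain ⟨U', hU', hU'mem⟩ := hcov (t ^ (n + 1))
      have hb := hball (t ^ n)
      have hmemU₀ : U₀ ∈ {U | U ∈ 𝒰 ∧ ∃ y ∈ U, wordDist ({t} : Set ↥H) (t ^ n) y < 2} := by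
        refine ⟨hU₀, t ^ n, ih, ?_⟩
        rw [wordDist]
        have h2 : (t ^ n)⁻¹ * t ^ n = 1 := by group
        rw [h2, wordLength_one]
        norm_num
      have hmemU' : U' ∈ {U | U ∈ 𝒰 ∧ ∃ y ∈ U, wordDist ({t} : Set ↥H) (t ^ n) y < 2} := by
        refine ⟨hU', t ^ (n + 1), hU'mem, ?_⟩
        rw [wordDist]
        have h2 : (t ^ n)⁻¹ * t ^ (n + 1) = t := by rw [pow_succ]; group
        rw [h2]
        have h3 : wordLength ({t} : Set ↥H) t ≤ 1 :=
          wordLength_le [t] (by simp) (by simp)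
        have : (wordLength ({t} : Set ↥H) t : ℝ) ≤ 1 := by exact_mod_cast h3
        linarith
      have hsub : {U | U ∈ 𝒰 ∧ ∃ y ∈ U, wordDist ({t} : Set ↥H) (t ^ n) y < 2}.Subsingleton :=
        (Set.ncard_le_one hb.1).mp (by simpa using hb.2)
      have := hsub hmemU' hmemU₀
      rw [← this]
      exact hU'mem
  set N : ℕ := ⌈D⌉₊ + 1 with hN
  have hNU := hstep N
  have hled := hD U₀ hU₀ 1 h1U₀ (t ^ N) hNU
  have hlow : (N : ℕ) ≤ wordLength ({t} : Set ↥H) (t ^ N) := by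
    have hle := coe_norm_le_wordLength hclos
      (by
        intro x hx
        rw [Set.mem_singleton_iff] at hx
        subst hx
        rw [ht]
        simp [ha]) (t ^ N)
    have hcoe : ((t ^ N : ↥H) : FreeGroup S) = a ^ N := by
      rw [SubmonoidClass.coe_pow]
    rw [hcoe, ha, FreeGroup.toWord_of_pow, List.length_replicate] at hle
    exact hle
  rw [wordDist] at hled
  have h1 : ((1 : ↥H))⁻¹ * t ^ N = t ^ N := by group
  rw [h1] at hled
  have h2 : (N : ℝ) ≤ D := by
    calc (N : ℝ) ≤ (wordLength ({t} : Set ↥H) (t ^ N) : ℝ) := by exact_mod_cast hlow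
    _ ≤ D := hled
  have h3 : D < (N : ℝ) := by
    calc D ≤ (⌈D⌉₊ : ℝ) := Nat.le_ceil D
    _ < ((⌈D⌉₊ + 1 : ℕ) : ℝ) := by exact_mod_cast Nat.lt_succ_self _
  rw [hN] at h2
  linarith

end AsdimAux

/-- The asymptotic dimension of a free group on a nonempty set is exactly `1`. -/
theorem asdim_free_group (S : Type*) [Nonempty S] :
    groupAsdim (FreeGroup S) = 1 := by
  obtain ⟨s₀⟩ := ‹Nonempty S›
  apply le_antisymm
  · rw [groupAsdim]
    refine iSup_le fun H => iSup_le fun T => iSup_le fun hfin => iSup_le fun hclos => ?_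
    rw [asdim]
    have h1 : AsdimLE (wordDist T) 1 := AsdimAux.upper H T hfin hclos
    have hmem : ((1 : ℕ) : ℕ∞) ∈ (↑) '' {n : ℕ | AsdimLE (wordDist T) n} := ⟨1, h1, rfl⟩
    calc sInf ((↑) '' {n : ℕ | AsdimLE (wordDist T) n}) ≤ ((1 : ℕ) : ℕ∞) := sInf_le hmem
    _ = 1 := by norm_cast
  · obtain ⟨H, T, hfin, hclos, hnot⟩ := AsdimAux.lower (S := S) s₀
    have hge : (1 : ℕ∞) ≤ asdim (wordDist T) := by
      rw [asdim]
      apply le_sInf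
      rintro b ⟨n, hn, rfl⟩
      have hne : n ≠ 0 := by
        rintro rfl
        exact hnot hn
      have : 1 ≤ n := Nat.one_le_iff_ne_zero.mpr hne
      exact_mod_cast this
    rw [groupAsdim]
    exact le_trans hge
      (le_iSup_of_le H (le_iSup_of_le T (le_iSup_of_le hfin (le_iSup_of_le hclos le_rfl))))
end

section
/- Let G = ⟨u, v, c, d, … | r⟩ be a one relator group with r cyclically reduced, in which the exponent sums of u and v in r are α ≠ 0 and β ≠ 0 respectively. Let C = ⟨t, b, c, d, … | r(b t^{−β}, t^{α}, c, d, …)⟩, the one relator group whose relator is obtained from r by substituting b t^{−β} for u and t^{α} for v. Then the homomorphism Ψ determined by u ↦ b t^{−β}, v ↦ t^{α}, c ↦ c, d ↦ d, … is an injective group homomorphism Ψ : G → C. -/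
/-- The substitution `u ↦ b t⁻ᵝ`, `v ↦ tᵅ`, `x ↦ x` for all other letters, where the
target alphabet is `Bool ⊕ {x // x ≠ u ∧ x ≠ v}`, with `Sum.inl true` playing the role
of `t` and `Sum.inl false` the role of `b`. -/
def substMap {S : Type*} [DecidableEq S] (u v : S) (α β : ℤ) :
    S → FreeGroup (Bool ⊕ {x : S // x ≠ u ∧ x ≠ v}) := fun x =>
  if hu : x = u then
    FreeGroup.of (Sum.inl false) * (FreeGroup.of (Sum.inl true)) ^ (-β)
  else if hv : x = v then
    (FreeGroup.of (Sum.inl true)) ^ α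
  else FreeGroup.of (Sum.inr ⟨x, hu, hv⟩)

section Aux

private lemma list_prod_ofAdd {S : Type*} (c : S → ℤ) (L : List (S × Bool)) :
    (L.map fun x => cond x.2 (Multiplicative.ofAdd (c x.1)) (Multiplicative.ofAdd (c x.1))⁻¹).prod
      = Multiplicative.ofAdd ((L.map fun p => if p.2 then c p.1 else -c p.1).sum) := by
  induction L with
  | nil => rfl
  | cons a L ih =>
    rcases a with ⟨s, b⟩
    cases b <;> simp [ih, ← ofAdd_add] <;> rfl

private lemma lift_ofAdd {S : Type*} [DecidableEq S] (c : S → ℤ) (w : FreeGroup S) :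
    FreeGroup.lift (fun s => Multiplicative.ofAdd (c s)) w
      = Multiplicative.ofAdd ((w.toWord.map fun p => if p.2 then c p.1 else -c p.1).sum) := by
  conv_lhs => rw [← FreeGroup.mk_toWord (x := w)]
  rw [FreeGroup.lift_mk]
  exact list_prod_ofAdd c w.toWord

private lemma sum_decomp {S : Type*} [DecidableEq S] (u v : S) (huv : u ≠ v) (α β : ℤ)
    (L : List (S × Bool)) :
    (L.map fun p => if p.2 then (if p.1 = u then β else if p.1 = v then -α else 0)
        else -(if p.1 = u then β else if p.1 = v then -α else 0)).sum
      = β * (L.map fun p => if p.1 = u then (if p.2 then (1:ℤ) else -1) else 0).sum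
        + (-α) * (L.map fun p => if p.1 = v then (if p.2 then (1:ℤ) else -1) else 0).sum := by
  induction L with
  | nil => simp
  | cons a L ih =>
    simp only [List.map_cons, List.sum_cons, ih]
    rcases a with ⟨s, b⟩
    by_cases hu : s = u <;> by_cases hv : s = v <;> cases b <;>
      simp [hu, hv, huv, huv.symm] <;> ring

universe u

/-- The two-element family of groups `{G, ℤ}` used to build the amalgam
`G *_{⟨g⟩ = ⟨t^a⟩} ℤ`. -/
private def Fam (G : Type u) : Bool → Type u :=
  fun b => cond b G (Multiplicative (ULift.{u} ℤ))

private instance famGroup {G : Type u} [Group G] : (b : Bool) → Group (Fam G b)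
  | true => inferInstanceAs (Group G)
  | false => inferInstanceAs (Group (Multiplicative (ULift ℤ)))

/-- The amalgamating maps `ℤ → G, n ↦ gⁿ` and `ℤ → ℤ, n ↦ a·n`. -/
private def famMap {G : Type u} [Group G] (g : G) (a : ℤ) :
    (b : Bool) → Multiplicative ℤ →* Fam G b
  | true => zpowersHom G g
  | false => zpowersHom (Multiplicative (ULift ℤ)) (Multiplicative.ofAdd (ULift.up a))

private lemma famMap_true_apply {G : Type u} [Group G] (g : G) (a : ℤ)
    (n : Multiplicative ℤ) : famMap g a true n = g ^ Multiplicative.toAdd n := rfl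

private lemma famMap_false_apply {G : Type u} [Group G] (g : G) (a : ℤ)
    (n : Multiplicative ℤ) :
    famMap (G := G) g a false n
      = Multiplicative.ofAdd (ULift.up (Multiplicative.toAdd n * a)) := by
  show (Multiplicative.ofAdd (ULift.up a)) ^ (Multiplicative.toAdd n) = _
  apply Multiplicative.toAdd.injective
  apply ULift.down_injective
  rw [toAdd_zpow]
  simp [ULift.smul_down, smul_eq_mul]

end Aux

/-- If `G = ⟨u, v, c, d, … | r⟩` is a one relator group with `r` cyclically reduced and
the exponent sums `α` of `u` and `β` of `v` in `r` are nonzero, then the homomorphism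
`Ψ` determined by `u ↦ b t⁻ᵝ`, `v ↦ tᵅ`, `c ↦ c`, `d ↦ d`, … is an injective
homomorphism from `G` to `C = ⟨t, b, c, d, … | r(b t⁻ᵝ, tᵅ, c, d, …)⟩`. -/
theorem psi_injective {S : Type*} [DecidableEq S] (u v : S) (huv : u ≠ v)
    (r : FreeGroup S) (hr : CyclicallyReduced r)
    (α β : ℤ) (hα : expSum u r = α) (hβ : expSum v r = β)
    (hα0 : α ≠ 0) (hβ0 : β ≠ 0) :
    ∃ Ψ : PresentedGroup ({r} : Set (FreeGroup S)) →*
        PresentedGroup ({FreeGroup.lift (substMap u v α β) r} :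
          Set (FreeGroup (Bool ⊕ {x : S // x ≠ u ∧ x ≠ v}))),
      (∀ x : S, Ψ (PresentedGroup.of x) =
        PresentedGroup.mk _ (substMap u v α β x)) ∧
      Function.Injective Ψ := by
  classical
  set r' : FreeGroup (Bool ⊕ {x : S // x ≠ u ∧ x ≠ v}) :=
    FreeGroup.lift (substMap u v α β) r with hr'def
  -- the relator maps to 1 in any presented group on it
  have hmk_r' : PresentedGroup.mk {r'} r' = 1 :=
    (QuotientGroup.eq_one_iff _).2 (Subgroup.subset_normalClosure (Set.mem_singleton _))
  have hmk_r : PresentedGroup.mk {r} r = 1 :=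
    (QuotientGroup.eq_one_iff _).2 (Subgroup.subset_normalClosure (Set.mem_singleton _))
  -- the homomorphism Ψ
  have hΨrel : ∀ ρ ∈ ({r} : Set (FreeGroup S)),
      FreeGroup.lift (fun s => PresentedGroup.mk {r'} (substMap u v α β s)) ρ = 1 := by
    intro ρ hρ
    rw [Set.mem_singleton_iff] at hρ; subst hρ
    have hcomp : FreeGroup.lift (fun s => PresentedGroup.mk {r'} (substMap u v α β s))
        = (PresentedGroup.mk {r'}).comp (FreeGroup.lift (substMap u v α β)) := by
      apply FreeGroup.ext_hom; intro s; simp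
    rw [hcomp]
    simpa using hmk_r'
  set Ψ : PresentedGroup ({r} : Set (FreeGroup S)) →* PresentedGroup {r'} :=
    PresentedGroup.toGroup hΨrel with hΨdef
  refine ⟨Ψ, fun x => PresentedGroup.toGroup.of hΨrel, ?_⟩
  -- exponent-sum homomorphism χ : G → ℤ showing v has infinite order
  set c : S → ℤ := fun s => if s = u then β else if s = v then -α else 0 with hcdef
  have hχrel : ∀ ρ ∈ ({r} : Set (FreeGroup S)),
      FreeGroup.lift (fun s => Multiplicative.ofAdd (c s)) ρ = 1 := by
    intro ρ hρ
    rw [Set.mem_singleton_iff] at hρ; subst hρ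
    rw [lift_ofAdd]
    have := sum_decomp u v huv α β ρ.toWord
    rw [hcdef]
    simp only [this]
    have hu' : (ρ.toWord.map fun p => if p.1 = u then (if p.2 then (1:ℤ) else -1) else 0).sum
        = α := hα
    have hv' : (ρ.toWord.map fun p => if p.1 = v then (if p.2 then (1:ℤ) else -1) else 0).sum
        = β := hβ
    rw [hu', hv']
    have : β * α + -α * β = 0 := by ring
    rw [this]; rfl
  set χ : PresentedGroup ({r} : Set (FreeGroup S)) →* Multiplicative ℤ :=
    PresentedGroup.toGroup hχrel with hχdef
  set g : PresentedGroup ({r} : Set (FreeGroup S)) := PresentedGroup.of v with hgdef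
  have hχg : χ g = Multiplicative.ofAdd (-α) := by
    rw [hgdef, hχdef, PresentedGroup.toGroup.of, hcdef]
    simp [huv.symm]
  -- the amalgam
  set φ := famMap g α with hφdef
  have hφinj : ∀ b, Function.Injective (φ b) := by
    intro b
    cases b with
    | false =>
      intro m n h
      rw [hφdef, famMap_false_apply, famMap_false_apply] at h
      have h2 := congrArg (fun x => (Multiplicative.toAdd x).down) h
      change Multiplicative.toAdd m * α = Multiplicative.toAdd n * α at h2
      have : Multiplicative.toAdd m = Multiplicative.toAdd n :=
        mul_right_cancel₀ hα0 h2
      exact Multiplicative.toAdd.injective this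
    | true =>
      intro m n h
      rw [hφdef, famMap_true_apply, famMap_true_apply] at h
      have h2 := congrArg χ h
      rw [map_zpow, map_zpow, hχg] at h2
      have h3 := congrArg Multiplicative.toAdd h2
      rw [toAdd_zpow, toAdd_zpow, toAdd_ofAdd, smul_eq_mul, smul_eq_mul] at h3
      have : Multiplicative.toAdd m = Multiplicative.toAdd n :=
        mul_right_cancel₀ (neg_ne_zero.2 hα0) h3
      exact Multiplicative.toAdd.injective this
  set OG : PresentedGroup ({r} : Set (FreeGroup S)) →* Monoid.PushoutI φ :=
    Monoid.PushoutI.of (φ := φ) true with hOGdef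
  have hOGinj : Function.Injective OG := Monoid.PushoutI.of_injective hφinj true
  set T : Monoid.PushoutI φ :=
    Monoid.PushoutI.of (φ := φ) false (Multiplicative.ofAdd (ULift.up 1)) with hTdef
  -- key relation : T ^ α = OG g
  have hTα : T ^ α = OG g := by
    have h1 : T ^ α
        = Monoid.PushoutI.of (φ := φ) false
            ((Multiplicative.ofAdd (ULift.up (1:ℤ))) ^ α) := by
      rw [hTdef]
      exact (map_zpow _ _ _).symm
    have h2 : ((Multiplicative.ofAdd (ULift.up (1:ℤ))) ^ α)
        = φ false (Multiplicative.ofAdd 1) := by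
      rw [hφdef, famMap_false_apply]
      apply Multiplicative.toAdd.injective
      apply ULift.down_injective
      rw [toAdd_zpow]
      simp [ULift.smul_down, smul_eq_mul]
    have h3 : OG g = Monoid.PushoutI.of (φ := φ) true (φ true (Multiplicative.ofAdd 1)) := by
      rw [hOGdef]
      congr 1
    rw [h1, h2, h3, Monoid.PushoutI.of_apply_eq_base, Monoid.PushoutI.of_apply_eq_base]
  -- the homomorphism Φ : C → amalgam
  set f' : (Bool ⊕ {x : S // x ≠ u ∧ x ≠ v}) → Monoid.PushoutI φ := fun s' =>
    match s' with
    | Sum.inl true => T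
    | Sum.inl false => OG (PresentedGroup.mk {r} (FreeGroup.of u)) * T ^ β
    | Sum.inr x => OG (PresentedGroup.mk {r} (FreeGroup.of x.1)) with hf'def
  have claim1 : ∀ s : S, FreeGroup.lift f' (substMap u v α β s)
      = OG (PresentedGroup.mk {r} (FreeGroup.of s)) := by
    intro s
    rw [substMap]
    by_cases hsu : s = u
    · subst hsu
      rw [dif_pos rfl]
      simp only [map_mul, map_zpow, FreeGroup.lift_apply_of, hf'def]
      rw [mul_assoc, ← zpow_add, add_neg_cancel, zpow_zero, mul_one]
    · by_cases hsv : s = v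
      · subst hsv
        rw [dif_neg hsu, dif_pos rfl]
        simp only [map_zpow, FreeGroup.lift_apply_of, hf'def]
        exact hTα
      · rw [dif_neg hsu, dif_neg hsv]
        simp [hf'def]
  have hΦrel : ∀ ρ ∈ ({r'} : Set (FreeGroup (Bool ⊕ {x : S // x ≠ u ∧ x ≠ v}))),
      FreeGroup.lift f' ρ = 1 := by
    intro ρ hρ
    rw [Set.mem_singleton_iff] at hρ; subst hρ
    have hcomp : (FreeGroup.lift f').comp (FreeGroup.lift (substMap u v α β))
        = OG.comp (PresentedGroup.mk {r}) := by
      apply FreeGroup.ext_hom; intro s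
      simp only [MonoidHom.comp_apply, FreeGroup.lift_apply_of]
      exact claim1 s
    have := congrArg (fun h : FreeGroup S →* Monoid.PushoutI φ => h r) hcomp
    simp only [MonoidHom.comp_apply] at this
    rw [hr'def, this, hmk_r, map_one]
  set Φ : PresentedGroup {r'} →* Monoid.PushoutI φ := PresentedGroup.toGroup hΦrel with hΦdef
  -- Φ ∘ Ψ = OG
  have hΦmk : ∀ w : FreeGroup (Bool ⊕ {x : S // x ≠ u ∧ x ≠ v}),
      Φ (PresentedGroup.mk {r'} w) = FreeGroup.lift f' w := by
    intro w
    have : Φ.comp (PresentedGroup.mk {r'}) = FreeGroup.lift f' := by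
      apply FreeGroup.ext_hom; intro s'
      simp only [MonoidHom.comp_apply, FreeGroup.lift_apply_of]
      exact PresentedGroup.toGroup.of hΦrel
    exact congrArg (fun h : FreeGroup _ →* Monoid.PushoutI φ => h w) this
  have hcomp : Φ.comp Ψ = OG := by
    apply PresentedGroup.ext
    intro x
    rw [MonoidHom.comp_apply, hΨdef, PresentedGroup.toGroup.of hΨrel, hΦmk]
    exact claim1 x
  -- conclude
  intro a b hab
  apply hOGinj
  rw [← hcomp]
  simp only [MonoidHom.comp_apply, hab]
end

section
/- Let G and H be groups and let Γ be a finitely generated subgroup of the free product G * H. Then there exist finitely generated subgroups G₀ ≤ G and H₀ ≤ H such that Γ is contained in the subgroup of G * H generated by G₀ and H₀, and that subgroup is isomorphic to the free product G₀ * H₀. -/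
open Monoid Function

/-- Key injectivity lemma: an injective family of maps induces an injective map on
free products `CoprodI`. -/
theorem coprodI_lift_of_comp_injective {ι : Type*} {A B : ι → Type*}
    [∀ i, Group (A i)] [∀ i, Group (B i)] (f : ∀ i, A i →* B i)
    (hf : ∀ i, Function.Injective (f i)) :
    Function.Injective (CoprodI.lift (fun i => (CoprodI.of : B i →* _).comp (f i))) := by
  classical
  rw [injective_iff_map_eq_one]
  intro x hx
  set w := CoprodI.Word.equiv x with hw
  have hxw : x = w.prod := (CoprodI.Word.equiv.left_inv x).symm
  set w' : CoprodI.Word B :=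
    { toList := w.toList.map (fun l => ⟨l.1, f l.1 l.2⟩),
      ne_one := by
        rintro l' hl'
        obtain ⟨⟨i, a⟩, hmem, rfl⟩ := List.mem_map.1 hl'
        simp only [ne_eq]
        intro h
        exact w.ne_one _ hmem (hf i (by simpa using h))
      chain_ne := by
        rw [List.isChain_map]
        exact w.chain_ne } with hw'
  have hprod : w'.prod = CoprodI.lift (fun i => (CoprodI.of : B i →* _).comp (f i)) w.prod := by
    simp only [CoprodI.Word.prod, hw', List.map_map, map_list_prod]
    congr 1
  have h1 : w'.prod = 1 := by rw [hprod, ← hxw, hx]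
  have hempty : w' = CoprodI.Word.empty := by
    exact CoprodI.Word.equiv.symm.injective h1
  have : w.toList = [] := by
    have := congrArg CoprodI.Word.toList hempty
    simpa [hw', CoprodI.Word.empty] using this
  rw [hxw]
  simp [CoprodI.Word.prod, this]

universe uG uH

/-- The `Bool`-indexed family `(G, H)` (with `ULift`s to equalize universes). -/
def boolFam (G : Type uG) (H : Type uH) : Bool → Type (max uG uH) :=
  fun b => Bool.rec (ULift.{uG} H) (ULift.{uH} G) b

instance boolFamGroup (G : Type uG) (H : Type uH) [Group G] [Group H] :
    ∀ b, Group (boolFam G H b)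
  | true => inferInstanceAs (Group (ULift.{uH} G))
  | false => inferInstanceAs (Group (ULift.{uG} H))

/-- The `MulEquiv` between the factors and the family members. -/
def boolFamEquivTrue (G : Type uG) (H : Type uH) [Group G] [Group H] :
    boolFam G H true ≃* G := MulEquiv.ulift

def boolFamEquivFalse (G : Type uG) (H : Type uH) [Group G] [Group H] :
    boolFam G H false ≃* H := MulEquiv.ulift

/-- The canonical homs from the factors into `Coprod G H`. -/
def toCoprodHoms (G : Type uG) (H : Type uH) [Group G] [Group H] :
    ∀ b, boolFam G H b →* Coprod G H
  | true => Coprod.inl.comp (boolFamEquivTrue G H).toMonoidHom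
  | false => Coprod.inr.comp (boolFamEquivFalse G H).toMonoidHom

/-- `Coprod G H` is isomorphic to the `Bool`-indexed `CoprodI`. -/
noncomputable def coprodEquivCoprodI (G : Type uG) (H : Type uH) [Group G] [Group H] :
    Coprod G H ≃* CoprodI (boolFam G H) :=
  MonoidHom.toMulEquiv
    (Coprod.lift
      ((CoprodI.of (M := boolFam G H) (i := true)).comp (boolFamEquivTrue G H).symm.toMonoidHom)
      ((CoprodI.of (M := boolFam G H) (i := false)).comp
        (boolFamEquivFalse G H).symm.toMonoidHom))
    (CoprodI.lift (toCoprodHoms G H))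
    (by apply Coprod.hom_ext <;> ext x <;>
          simp [toCoprodHoms, boolFamEquivTrue, boolFamEquivFalse, MulEquiv.ulift] <;> rfl
        )
    (by refine CoprodI.ext_hom _ _ (fun i => ?_); cases i <;> ext x <;>
          simp [toCoprodHoms, boolFamEquivTrue, boolFamEquivFalse, MulEquiv.ulift] <;> rfl
        )

section Sub

variable {G : Type uG} {H : Type uH} [Group G] [Group H]

/-- The family of inclusion homs induced by subgroups. -/
def subFamHom (G₀ : Subgroup G) (H₀ : Subgroup H) :
    ∀ b, boolFam ↥G₀ ↥H₀ b →* boolFam G H b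
  | true => (boolFamEquivTrue G H).symm.toMonoidHom.comp
      (G₀.subtype.comp (boolFamEquivTrue ↥G₀ ↥H₀).toMonoidHom)
  | false => (boolFamEquivFalse G H).symm.toMonoidHom.comp
      (H₀.subtype.comp (boolFamEquivFalse ↥G₀ ↥H₀).toMonoidHom)

theorem subFamHom_injective (G₀ : Subgroup G) (H₀ : Subgroup H) (b : Bool) :
    Function.Injective (subFamHom G₀ H₀ b) := by
  cases b <;>
  · simp only [subFamHom, MonoidHom.coe_comp, MulEquiv.coe_toMonoidHom]
    exact (MulEquiv.injective _).comp
      ((Subgroup.subtype_injective _).comp (MulEquiv.injective _))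

/-- The canonical hom `G₀ ∗ H₀ →* G ∗ H`. -/
noncomputable def phiHom (G₀ : Subgroup G) (H₀ : Subgroup H) : Coprod ↥G₀ ↥H₀ →* Coprod G H :=
  Coprod.lift (Coprod.inl.comp G₀.subtype) (Coprod.inr.comp H₀.subtype)

theorem phiHom_eq (G₀ : Subgroup G) (H₀ : Subgroup H) :
    ((coprodEquivCoprodI G H).symm.toMonoidHom.comp
      ((CoprodI.lift fun b => (CoprodI.of (M := boolFam G H)).comp (subFamHom G₀ H₀ b)).comp
        (coprodEquivCoprodI ↥G₀ ↥H₀).toMonoidHom)) = phiHom G₀ H₀ := by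
  apply Coprod.hom_ext <;> ext x <;>
    simp [phiHom, coprodEquivCoprodI, subFamHom, toCoprodHoms, boolFamEquivTrue,
      boolFamEquivFalse, MulEquiv.ulift, MonoidHom.toMulEquiv] <;> rfl

theorem phiHom_injective (G₀ : Subgroup G) (H₀ : Subgroup H) :
    Function.Injective (phiHom G₀ H₀) := by
  rw [← phiHom_eq]
  simp only [MonoidHom.coe_comp, MulEquiv.coe_toMonoidHom]
  exact (MulEquiv.injective _).comp
    ((coprodI_lift_of_comp_injective _ (subFamHom_injective G₀ H₀)).comp (MulEquiv.injective _))

theorem phiHom_range (G₀ : Subgroup G) (H₀ : Subgroup H) :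
    (phiHom G₀ H₀).range = G₀.map Coprod.inl ⊔ H₀.map Coprod.inr := by
  rw [phiHom, Coprod.range_lift, ← MonoidHom.map_range, ← MonoidHom.map_range,
    Subgroup.range_subtype, Subgroup.range_subtype]

end Sub

theorem join_mono {G : Type uG} {H : Type uH} [Group G] [Group H]
    {s s' : Set G} {t t' : Set H} (hs : s ⊆ s') (ht : t ⊆ t') :
    ((Subgroup.closure s).map Coprod.inl ⊔ (Subgroup.closure t).map Coprod.inr : Subgroup (Coprod G H)) ≤
      ((Subgroup.closure s').map Coprod.inl ⊔ (Subgroup.closure t').map Coprod.inr : Subgroup (Coprod G H)) :=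
  sup_le_sup (Subgroup.map_mono (Subgroup.closure_mono hs))
    (Subgroup.map_mono (Subgroup.closure_mono ht))


/-- Every finitely generated subgroup `Γ` of a free product `G * H` is contained in the
subgroup generated by finitely generated subgroups `G₀ ≤ G` and `H₀ ≤ H`, and that
subgroup is isomorphic to the free product `G₀ * H₀`. -/
theorem fg_subgroup_of_free_product {G H : Type*} [Group G] [Group H]
    (Γ : Subgroup (Monoid.Coprod G H)) (hΓ : Γ.FG) :
    ∃ (G₀ : Subgroup G) (H₀ : Subgroup H), G₀.FG ∧ H₀.FG ∧
      Γ ≤ G₀.map Monoid.Coprod.inl ⊔ H₀.map Monoid.Coprod.inr ∧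
      Nonempty ((↥(G₀.map Monoid.Coprod.inl ⊔ H₀.map Monoid.Coprod.inr : Subgroup (Monoid.Coprod G H))) ≃*
        Monoid.Coprod G₀ H₀) := by
  classical
  have hP : ∀ x : Coprod G H, ∃ (s : Finset G) (t : Finset H),
      x ∈ (Subgroup.closure (↑s : Set G)).map Coprod.inl ⊔
        (Subgroup.closure (↑t : Set H)).map Coprod.inr := by
    intro x
    have hx : x ∈ Subgroup.closure (Set.range (Coprod.inl : G →* Coprod G H) ∪
        Set.range (Coprod.inr : H →* Coprod G H)) := by
      rw [Coprod.closure_range_inl_union_inr]; trivial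
    induction hx using Subgroup.closure_induction with
    | mem x hx =>
      rcases hx with ⟨g, rfl⟩ | ⟨h, rfl⟩
      · exact ⟨{g}, ∅, Subgroup.mem_sup_left ⟨g, Subgroup.subset_closure (by simp), rfl⟩⟩
      · exact ⟨∅, {h}, Subgroup.mem_sup_right ⟨h, Subgroup.subset_closure (by simp), rfl⟩⟩
    | one => exact ⟨∅, ∅, one_mem _⟩
    | mul x y hx hy ihx ihy =>
      obtain ⟨s₁, t₁, h₁⟩ := ihx
      obtain ⟨s₂, t₂, h₂⟩ := ihy
      refine ⟨s₁ ∪ s₂, t₁ ∪ t₂, mul_mem ?_ ?_⟩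
      · exact join_mono (by rw [Finset.coe_union]; exact Set.subset_union_left)
          (by rw [Finset.coe_union]; exact Set.subset_union_left) h₁
      · exact join_mono (by rw [Finset.coe_union]; exact Set.subset_union_right)
          (by rw [Finset.coe_union]; exact Set.subset_union_right) h₂
    | inv x hx ihx =>
      obtain ⟨s, t, h⟩ := ihx
      exact ⟨s, t, inv_mem h⟩
  obtain ⟨S, hS⟩ := hΓ
  have hcover : ∀ T : Finset (Coprod G H), ∃ (s : Finset G) (t : Finset H),
      (↑T : Set (Coprod G H)) ⊆
      ↑((Subgroup.closure (↑s : Set G)).map Coprod.inl ⊔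
        (Subgroup.closure (↑t : Set H)).map Coprod.inr : Subgroup (Coprod G H)) := by
    intro T
    induction T using Finset.induction_on with
    | empty => exact ⟨∅, ∅, by simp⟩
    | insert _ _ ha ih =>
      obtain ⟨s₁, t₁, h₁⟩ := ih
      obtain ⟨s₂, t₂, h₂⟩ := hP _
      refine ⟨s₁ ∪ s₂, t₁ ∪ t₂, ?_⟩
      rw [Finset.coe_insert, Set.insert_subset_iff]
      constructor
      · exact join_mono (by rw [Finset.coe_union]; exact Set.subset_union_right)
          (by rw [Finset.coe_union]; exact Set.subset_union_right) h₂
      · exact h₁.trans (join_mono (by rw [Finset.coe_union]; exact Set.subset_union_left)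
          (by rw [Finset.coe_union]; exact Set.subset_union_left))
  obtain ⟨s, t, hst⟩ := hcover S
  refine ⟨Subgroup.closure ↑s, Subgroup.closure ↑t, ⟨s, rfl⟩, ⟨t, rfl⟩, ?_, ?_⟩
  · rw [← hS]
    exact (Subgroup.closure_le _).2 hst
  · exact ⟨(MulEquiv.subgroupCongr (phiHom_range _ _).symm).trans
      (MonoidHom.ofInjective (phiHom_injective _ _)).symm⟩
end
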